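/- Let (A, H, M) be a left Hopf triple over a commutative ring k with grouplike element σ ∈ H such that (M,σ) is a matched pair in involution (σm = m for all m ∈ M, and Ŝ(m⊗h) = h⁽²⁾m ⊗ σS(h⁽¹⁾) satisfies Ŝ² = id on M⊗H). Then for every a ∈ A and m ∈ M, writing the three-fold iterated coaction of A as a ↦ a⁽⁻³⁾⊗a⁽⁻²⁾⊗a⁽⁻¹⁾⊗a⁽⁰⁾ ∈ H⊗H⊗H⊗A, the following identity holds in H ⊗ M ⊗ A: a⁽⁻¹⁾σS(a⁽⁻³⁾) ⊗ a⁽⁻²⁾m ⊗ a⁽⁰⁾ = σ ⊗ a⁽⁻¹⁾m ⊗ a⁽⁰⁾. -/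

import Mathlib

open TensorProduct Coalgebra

set_option maxHeartbeats 2000000
set_option synthInstance.maxHeartbeats 1000000
set_option linter.unnecessarySimpa false

section HopfAux
open HopfAlgebra LinearMap

section Anti
variable {k : Type*} [CommRing k] {H : Type*} [Ring H] [HopfAlgebra k H]

lemma antipode_one' : HopfAlgebra.antipode (R := k) (1 : H) = 1 := by
  have := mul_antipode_rTensor_comul_apply (R := k) (1 : H)
  simpa [Algebra.TensorProduct.one_def] using this

lemma antipode_mul_rev (x y : H) :
    HopfAlgebra.antipode (R := k) (x * y)
      = HopfAlgebra.antipode (R := k) y * HopfAlgebra.antipode (R := k) x := by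
  exact HopfAlgebra.antipode_mul_antidistrib x y
end Anti
section Aux2
variable {k : Type*} [CommRing k] {H : Type*} [Ring H] [HopfAlgebra k H]
  {M : Type*} [AddCommGroup M] [Module k M]

/-- `n ⊗ (p ⊗ q) ↦ act q n ⊗ σ·S(p)`; the Hopf-triple "twisted antipode" without the
final comultiplication. -/
noncomputable def auxL (σ : H) (act : H →ₗ[k] M →ₗ[k] M) :
    M ⊗[k] (H ⊗[k] H) →ₗ[k] M ⊗[k] H :=
  (TensorProduct.comm k H M).toLinearMap
    ∘ₗ LinearMap.lTensor H (TensorProduct.lift act.flip)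
    ∘ₗ (TensorProduct.leftComm k M H H).toLinearMap
    ∘ₗ LinearMap.lTensor M
        (LinearMap.rTensor H (LinearMap.mulLeft k σ ∘ₗ HopfAlgebra.antipode (R := k)))

@[simp] lemma auxL_tmul (σ : H) (act : H →ₗ[k] M →ₗ[k] M) (n : M) (p q : H) :
    auxL σ act (n ⊗ₜ[k] (p ⊗ₜ[k] q))
      = act q n ⊗ₜ[k] (σ * HopfAlgebra.antipode (R := k) p) := by
  simp [auxL, TensorProduct.leftComm_tmul]

/-- `(p ⊗ q) ⊗ (r ⊗ s) ↦ act s p ⊗ q·S(r)`. -/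
noncomputable def auxR2 (act : H →ₗ[k] M →ₗ[k] M) :
    (M ⊗[k] H) ⊗[k] (H ⊗[k] H) →ₗ[k] M ⊗[k] H :=
  TensorProduct.map (TensorProduct.lift act ∘ₗ (TensorProduct.comm k M H).toLinearMap)
      (LinearMap.mul' k H ∘ₗ LinearMap.lTensor H (HopfAlgebra.antipode (R := k)))
    ∘ₗ (TensorProduct.tensorTensorTensorComm k M H H H).toLinearMap
    ∘ₗ LinearMap.lTensor (M ⊗[k] H) (TensorProduct.comm k H H).toLinearMap

@[simp] lemma auxR2_tmul (act : H →ₗ[k] M →ₗ[k] M) (p : M) (q r s : H) :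
    auxR2 act ((p ⊗ₜ[k] q) ⊗ₜ[k] (r ⊗ₜ[k] s))
      = act s p ⊗ₜ[k] (q * HopfAlgebra.antipode (R := k) r) := by
  simp [auxR2, TensorProduct.tensorTensorTensorComm_tmul, LinearMap.mul'_apply]

/-- `(n ⊗ f) ⊗ x ↦ n ⊗ x·f`. -/
noncomputable def auxNu : (M ⊗[k] H) ⊗[k] H →ₗ[k] M ⊗[k] H :=
  LinearMap.lTensor M (LinearMap.mul' k H ∘ₗ (TensorProduct.comm k H H).toLinearMap)
    ∘ₗ (TensorProduct.assoc k M H H).toLinearMap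

@[simp] lemma auxNu_tmul (n : M) (f x : H) :
    auxNu ((n ⊗ₜ[k] f) ⊗ₜ[k] x) = n ⊗ₜ[k] (x * f) := by
  simp [auxNu, LinearMap.mul'_apply]

/-- `p ⊗ (r ⊗ s) ↦ s·σ·S(p) ⊗ act r m`. -/
noncomputable def auxPhi (σ : H) (act : H →ₗ[k] M →ₗ[k] M) (m : M) :
    H ⊗[k] (H ⊗[k] H) →ₗ[k] H ⊗[k] M :=
  LinearMap.rTensor M (LinearMap.mul' k H ∘ₗ (TensorProduct.comm k H H).toLinearMap)
    ∘ₗ (TensorProduct.assoc k H H M).symm.toLinearMap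
    ∘ₗ LinearMap.lTensor H
        ((TensorProduct.comm k M H).toLinearMap ∘ₗ LinearMap.rTensor H (act.flip m))
    ∘ₗ LinearMap.rTensor (H ⊗[k] H)
        (LinearMap.mulLeft k σ ∘ₗ HopfAlgebra.antipode (R := k))

@[simp] lemma auxPhi_tmul (σ : H) (act : H →ₗ[k] M →ₗ[k] M) (m : M) (p r s : H) :
    auxPhi σ act m (p ⊗ₜ[k] (r ⊗ₜ[k] s))
      = (s * (σ * HopfAlgebra.antipode (R := k) p)) ⊗ₜ[k] act r m := by
  simp [auxPhi, LinearMap.mul'_apply]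

end Aux2

open HopfAlgebra LinearMap in
/-- Let `(A, H, M)` be a left Hopf triple over a commutative ring `k`
with grouplike `σ ∈ H` such that `(M,σ)` is a matched pair in involution.  Then for all
`a ∈ A`, `m ∈ M` the identity
`a⁽⁻¹⁾σS(a⁽⁻³⁾) ⊗ a⁽⁻²⁾m ⊗ a⁽⁰⁾ = σ ⊗ a⁽⁻¹⁾m ⊗ a⁽⁰⁾` holds in `H ⊗ (M ⊗ A)`. -/
theorem statement17 (k : Type*) [CommRing k] (H : Type*) [Ring H] [HopfAlgebra k H]
    (A : Type*) [Ring A] [Algebra k A]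
    (M : Type*) [AddCommGroup M] [Module k M] [Module H M]
    [IsScalarTower k H M] [SMulCommClass k H M]
    -- the coaction of `H` on `A`
    (ρ : A →ₗ[k] H ⊗[k] A)
    -- coassociativity and counitality of the coaction
    (hcoassoc : ∀ a : A,
      TensorProduct.assoc k H H A (LinearMap.rTensor A (comul (R := k)) (ρ a)) =
        LinearMap.lTensor H ρ (ρ a))
    (hcounit : ∀ a : A,
      TensorProduct.lid k A (LinearMap.rTensor A (counit (R := k)) (ρ a)) = a)
    -- the coaction is an algebra homomorphism
    (hmul : ∀ a b : A, ρ (a * b) = ρ a * ρ b) (hone : ρ 1 = 1)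
    -- `σ` is grouplike
    (σ : H) (hΔσ : comul (R := k) σ = σ ⊗ₜ[k] σ) (hεσ : counit (R := k) σ = 1)
    -- the `k`-bilinear action of `H` on `M`
    (actHM : H →ₗ[k] M →ₗ[k] M)
    (hactHM : ∀ (h : H) (m : M), actHM h m = h • m)
    -- `(M, σ)` is a matched pair …
    (hmp : ∀ m : M, σ • m = m) :
    -- … in involution:  `Ŝ(m ⊗ h) = h⁽²⁾m ⊗ σS(h⁽¹⁾)` squares to the identity
    letI Shat : M ⊗[k] H →ₗ[k] M ⊗[k] H :=
      (TensorProduct.comm k H M).toLinearMap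
        ∘ₗ LinearMap.lTensor H (TensorProduct.lift actHM.flip)
        ∘ₗ (TensorProduct.leftComm k M H H).toLinearMap
        ∘ₗ LinearMap.lTensor M
            (LinearMap.rTensor H
              (LinearMap.mulLeft k σ ∘ₗ HopfAlgebra.antipode (R := k)))
        ∘ₗ LinearMap.lTensor M (comul (R := k))
    ∀ _hinv : ∀ z : M ⊗[k] H, Shat (Shat z) = z,
    -- conclusion: `a⁽⁻¹⁾σS(a⁽⁻³⁾) ⊗ a⁽⁻²⁾m ⊗ a⁽⁰⁾ = σ ⊗ a⁽⁻¹⁾m ⊗ a⁽⁰⁾`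
    ∀ (a : A) (m : M),
      ((LinearMap.rTensor (M ⊗[k] A)
            (LinearMap.mul' k H ∘ₗ (TensorProduct.comm k H H).toLinearMap))
        ∘ₗ (TensorProduct.assoc k H H (M ⊗[k] A)).symm.toLinearMap
        ∘ₗ LinearMap.lTensor H (TensorProduct.leftComm k M H A).toLinearMap
        ∘ₗ LinearMap.lTensor H (LinearMap.rTensor (H ⊗[k] A) (actHM.flip m))
        ∘ₗ LinearMap.rTensor (H ⊗[k] (H ⊗[k] A))
            (LinearMap.mulLeft k σ ∘ₗ HopfAlgebra.antipode (R := k)))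
        (LinearMap.lTensor H
            ((TensorProduct.assoc k H H A).toLinearMap
              ∘ₗ LinearMap.rTensor A (comul (R := k)))
          (((TensorProduct.assoc k H H A).toLinearMap
              ∘ₗ LinearMap.rTensor A (comul (R := k))) (ρ a)))
        = σ ⊗ₜ[k] (LinearMap.rTensor A (actHM.flip m) (ρ a)) := by
  intro hinv a m
  -- the "cyclic antipode" on `M ⊗ H`
  have hinv' : ∀ z : M ⊗[k] H,
      (auxL σ actHM ∘ₗ LinearMap.lTensor M (comul (R := k)))
        ((auxL σ actHM ∘ₗ LinearMap.lTensor M (comul (R := k))) z) = z := hinv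
  set SH : M ⊗[k] H →ₗ[k] M ⊗[k] H :=
    auxL σ actHM ∘ₗ LinearMap.lTensor M (comul (R := k)) with hSHdef
  have hSHinj : Function.Injective SH := Function.Involutive.injective hinv'
  have hSH_tmul : ∀ (n : M) (g : H),
      SH (n ⊗ₜ[k] g) = auxL σ actHM (n ⊗ₜ[k] (comul (R := k) g)) := by
    intro n g
    simp [hSHdef]
  have hσS : σ * HopfAlgebra.antipode (R := k) σ = 1 := by
    have := HopfAlgebra.mul_antipode_lTensor_comul_apply (R := k) σ
    rw [hΔσ] at this
    simpa [hεσ, LinearMap.mul'_apply] using this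
  -- key bilinear identity behind `Ŝ(n ⊗ x f) = x ▷ Ŝ(n ⊗ f)`
  have key : ∀ (n : M) (u v : H ⊗[k] H),
      auxL σ actHM (n ⊗ₜ[k] (v * u))
        = auxR2 actHM (auxL σ actHM (n ⊗ₜ[k] u) ⊗ₜ[k] v) := by
    intro n u v
    induction u using TensorProduct.induction_on with
    | zero => simp
    | tmul f1 f2 =>
      induction v using TensorProduct.induction_on with
      | zero => simp
      | tmul x1 x2 =>
        simp only [Algebra.TensorProduct.tmul_mul_tmul, auxL_tmul, auxR2_tmul]
        rw [antipode_mul_rev, hactHM, hactHM, hactHM, mul_smul, mul_assoc]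
      | add v1 v2 h1 h2 => simp [add_mul, tmul_add, h1, h2]
    | add u1 u2 h1 h2 => simp [mul_add, tmul_add, add_tmul, h1, h2]
  have key2 : ∀ (n : M) (f x : H),
      SH (n ⊗ₜ[k] (x * f))
        = auxR2 actHM (SH (n ⊗ₜ[k] f) ⊗ₜ[k] (comul (R := k) x)) := by
    intro n f x
    rw [hSH_tmul, hSH_tmul, Bialgebra.comul_mul]
    exact key n _ _
  have key3 : ∀ w : (M ⊗[k] H) ⊗[k] H,
      SH (auxNu w)
        = auxR2 actHM
            ((LinearMap.lTensor (M ⊗[k] H) (comul (R := k)))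
              ((LinearMap.rTensor H SH) w)) := by
    intro w
    induction w using TensorProduct.induction_on with
    | zero => simp
    | tmul z x =>
      simp only [LinearMap.rTensor_tmul, LinearMap.lTensor_tmul]
      induction z using TensorProduct.induction_on with
      | zero => simp
      | tmul n f => rw [auxNu_tmul]; exact key2 n f x
      | add z1 z2 h1 h2 => simp only [add_tmul, map_add, TensorProduct.add_tmul] at *; rw [h1, h2]
    | add w1 w2 h1 h2 => simp [map_add, h1, h2]
  -- step 1: expressing the Δ²-processed map through `auxNu` and `SH`
  have claim1' : ∀ (v : H ⊗[k] H) (x : H),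
      auxPhi σ actHM m ((TensorProduct.assoc k H H H) (v ⊗ₜ[k] x))
        = (TensorProduct.comm k M H) (auxNu ((auxL σ actHM (m ⊗ₜ[k] v)) ⊗ₜ[k] x)) := by
    intro v x
    induction v using TensorProduct.induction_on with
    | zero => simp
    | tmul p q => simp
    | add v1 v2 h1 h2 =>
      simp only [TensorProduct.add_tmul, map_add, TensorProduct.tmul_add] at *
      rw [h1, h2]
  have claim1 : ∀ u : H ⊗[k] H,
      auxPhi σ actHM m
          ((TensorProduct.assoc k H H H) ((LinearMap.rTensor H (comul (R := k))) u))
        = (TensorProduct.comm k M H)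
            (auxNu ((LinearMap.rTensor H (SH ∘ₗ (TensorProduct.mk k M H) m)) u)) := by
    intro u
    induction u using TensorProduct.induction_on with
    | zero => simp
    | tmul g x =>
      simp only [LinearMap.rTensor_tmul, LinearMap.coe_comp, Function.comp_apply,
        TensorProduct.mk_apply]
      rw [hSH_tmul]
      exact claim1' _ x
    | add u1 u2 h1 h2 => simp only [map_add, h1, h2]
  -- the `E` computation
  have claimE' : ∀ (v : H ⊗[k] H) (x : H),
      auxR2 actHM
          ((LinearMap.rTensor (H ⊗[k] H) ((TensorProduct.mk k M H) m))
            ((TensorProduct.assoc k H H H) (v ⊗ₜ[k] x)))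
        = (actHM x m) ⊗ₜ[k]
            (LinearMap.mul' k H
              ((LinearMap.lTensor H (HopfAlgebra.antipode (R := k))) v)) := by
    intro v x
    induction v using TensorProduct.induction_on with
    | zero => simp
    | tmul r s => simp [LinearMap.mul'_apply]
    | add v1 v2 h1 h2 =>
      simp only [TensorProduct.add_tmul, map_add, TensorProduct.tmul_add] at *
      rw [h1, h2]
  have claimE : ∀ u : H ⊗[k] H,
      auxR2 actHM
          ((LinearMap.rTensor (H ⊗[k] H) ((TensorProduct.mk k M H) m))
            ((TensorProduct.assoc k H H H) ((LinearMap.rTensor H (comul (R := k))) u)))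
        = (TensorProduct.map (actHM.flip m) LinearMap.id)
            ((TensorProduct.comm k H H)
              ((LinearMap.rTensor H
                  (LinearMap.mul' k H
                    ∘ₗ LinearMap.lTensor H (HopfAlgebra.antipode (R := k))
                    ∘ₗ comul (R := k))) u)) := by
    intro u
    induction u using TensorProduct.induction_on with
    | zero => simp
    | tmul g x =>
      simp only [LinearMap.rTensor_tmul, LinearMap.coe_comp, Function.comp_apply,
        TensorProduct.comm_tmul, TensorProduct.map_tmul, LinearMap.id_coe, id_eq,
        LinearMap.flip_apply]
      exact claimE' _ x
    | add u1 u2 h1 h2 => simp only [map_add, h1, h2]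
  -- the core identity `h₃ σ S(h₁) ⊗ h₂ m = σ ⊗ h m`
  have core : ∀ h : H,
      auxPhi σ actHM m ((LinearMap.lTensor H (comul (R := k))) (comul (R := k) h))
        = σ ⊗ₜ[k] (actHM h m) := by
    intro h
    have hca := Coalgebra.coassoc_apply (R := k) h
    rw [← hca, claim1 (comul (R := k) h)]
    have hXY : auxNu
        ((LinearMap.rTensor H (SH ∘ₗ (TensorProduct.mk k M H) m)) (comul (R := k) h))
        = (actHM h m) ⊗ₜ[k] σ := by
      apply hSHinj
      rw [key3]
      -- combine the two rTensors
      have hcomb : (LinearMap.rTensor H SH)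
          ((LinearMap.rTensor H (SH ∘ₗ (TensorProduct.mk k M H) m)) (comul (R := k) h))
          = (LinearMap.rTensor H ((TensorProduct.mk k M H) m)) (comul (R := k) h) := by
        rw [← LinearMap.comp_apply, ← LinearMap.rTensor_comp]
        have hcc : (SH ∘ₗ (SH ∘ₗ (TensorProduct.mk k M H) m)) = (TensorProduct.mk k M H) m :=
          LinearMap.ext fun g => by simpa using hinv' (m ⊗ₜ[k] g)
        rw [hcc]
      rw [hcomb]
      -- left side via claimE and the antipode axiom
      have hL : auxR2 actHM
          ((LinearMap.lTensor (M ⊗[k] H) (comul (R := k)))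
            ((LinearMap.rTensor H ((TensorProduct.mk k M H) m)) (comul (R := k) h)))
          = (actHM h m) ⊗ₜ[k] (1 : H) := by
        have hswap : (LinearMap.lTensor (M ⊗[k] H) (comul (R := k)))
            ((LinearMap.rTensor H ((TensorProduct.mk k M H) m)) (comul (R := k) h))
            = (LinearMap.rTensor (H ⊗[k] H) ((TensorProduct.mk k M H) m))
                ((LinearMap.lTensor H (comul (R := k))) (comul (R := k) h)) := by
          have hswap2 : LinearMap.lTensor (M ⊗[k] H) (comul (R := k))
                ∘ₗ LinearMap.rTensor H ((TensorProduct.mk k M H) m)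
              = LinearMap.rTensor (H ⊗[k] H) ((TensorProduct.mk k M H) m)
                ∘ₗ LinearMap.lTensor H (comul (R := k)) := by
            rw [LinearMap.lTensor_comp_rTensor, LinearMap.rTensor_comp_lTensor]
          have := LinearMap.congr_fun hswap2 (comul (R := k) h)
          simpa only [LinearMap.comp_apply] using this
        rw [hswap, ← hca, claimE]
        have hF : (LinearMap.mul' k H
              ∘ₗ LinearMap.lTensor H (HopfAlgebra.antipode (R := k))
              ∘ₗ comul (R := k) : H →ₗ[k] H)
            = (Algebra.linearMap k H) ∘ₗ counit (R := k) := by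
          apply LinearMap.ext
          intro g
          simpa using HopfAlgebra.mul_antipode_lTensor_comul_apply (R := k) g
        rw [hF]
        have : (LinearMap.rTensor H ((Algebra.linearMap k H) ∘ₗ counit (R := k)))
            (comul (R := k) h) = (1 : H) ⊗ₜ[k] h := by
          rw [LinearMap.rTensor_comp, LinearMap.comp_apply,
            Coalgebra.rTensor_counit_comul]
          simp
        rw [this]
        simp
      rw [hL]
      -- right side
      rw [hSH_tmul, hΔσ, auxL_tmul, hσS, hactHM σ, hactHM h, hmp]
    rw [hXY]
    simp
  -- assembling the `A`-leg
  have claimA : ∀ (p : H) (v : H ⊗[k] H) (b : A),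
      ((LinearMap.rTensor (M ⊗[k] A)
            (LinearMap.mul' k H ∘ₗ (TensorProduct.comm k H H).toLinearMap))
        ∘ₗ (TensorProduct.assoc k H H (M ⊗[k] A)).symm.toLinearMap
        ∘ₗ LinearMap.lTensor H (TensorProduct.leftComm k M H A).toLinearMap
        ∘ₗ LinearMap.lTensor H (LinearMap.rTensor (H ⊗[k] A) (actHM.flip m))
        ∘ₗ LinearMap.rTensor (H ⊗[k] (H ⊗[k] A))
            (LinearMap.mulLeft k σ ∘ₗ HopfAlgebra.antipode (R := k)))
          (p ⊗ₜ[k] ((TensorProduct.assoc k H H A) (v ⊗ₜ[k] b)))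
        = (TensorProduct.assoc k H M A) ((auxPhi σ actHM m (p ⊗ₜ[k] v)) ⊗ₜ[k] b) := by
    intro p v b
    induction v using TensorProduct.induction_on with
    | zero => simp
    | tmul r s =>
      simp [LinearMap.mul'_apply, TensorProduct.leftComm_tmul]
    | add v1 v2 h1 h2 =>
      simp only [TensorProduct.add_tmul, map_add, TensorProduct.tmul_add] at *
      rw [h1, h2]
  have claimB : ∀ (u : H ⊗[k] H) (b : A),
      ((LinearMap.rTensor (M ⊗[k] A)
            (LinearMap.mul' k H ∘ₗ (TensorProduct.comm k H H).toLinearMap))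
        ∘ₗ (TensorProduct.assoc k H H (M ⊗[k] A)).symm.toLinearMap
        ∘ₗ LinearMap.lTensor H (TensorProduct.leftComm k M H A).toLinearMap
        ∘ₗ LinearMap.lTensor H (LinearMap.rTensor (H ⊗[k] A) (actHM.flip m))
        ∘ₗ LinearMap.rTensor (H ⊗[k] (H ⊗[k] A))
            (LinearMap.mulLeft k σ ∘ₗ HopfAlgebra.antipode (R := k)))
          ((LinearMap.lTensor H
              ((TensorProduct.assoc k H H A).toLinearMap
                ∘ₗ LinearMap.rTensor A (comul (R := k))))
            ((TensorProduct.assoc k H H A) (u ⊗ₜ[k] b)))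
        = (TensorProduct.assoc k H M A)
            ((auxPhi σ actHM m ((LinearMap.lTensor H (comul (R := k))) u)) ⊗ₜ[k] b) := by
    intro u b
    induction u using TensorProduct.induction_on with
    | zero => simp
    | tmul p q =>
      have h1 : (TensorProduct.assoc k H H A) ((p ⊗ₜ[k] q) ⊗ₜ[k] b) = p ⊗ₜ[k] (q ⊗ₜ[k] b) :=
        rfl
      rw [h1]
      have h2 : (LinearMap.lTensor H
            ((TensorProduct.assoc k H H A).toLinearMap
              ∘ₗ LinearMap.rTensor A (comul (R := k)))) (p ⊗ₜ[k] (q ⊗ₜ[k] b))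
          = p ⊗ₜ[k] ((TensorProduct.assoc k H H A) ((comul (R := k) q) ⊗ₜ[k] b)) := by
        simp
      rw [h2]
      have h3 : (LinearMap.lTensor H (comul (R := k))) (p ⊗ₜ[k] q)
          = p ⊗ₜ[k] (comul (R := k) q) := by simp
      rw [h3]
      exact claimA p _ b
    | add u1 u2 h1 h2 => simp only [map_add, TensorProduct.add_tmul, h1, h2]
  -- main reduction
  have main : ∀ w : H ⊗[k] A,
      ((LinearMap.rTensor (M ⊗[k] A)
            (LinearMap.mul' k H ∘ₗ (TensorProduct.comm k H H).toLinearMap))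
        ∘ₗ (TensorProduct.assoc k H H (M ⊗[k] A)).symm.toLinearMap
        ∘ₗ LinearMap.lTensor H (TensorProduct.leftComm k M H A).toLinearMap
        ∘ₗ LinearMap.lTensor H (LinearMap.rTensor (H ⊗[k] A) (actHM.flip m))
        ∘ₗ LinearMap.rTensor (H ⊗[k] (H ⊗[k] A))
            (LinearMap.mulLeft k σ ∘ₗ HopfAlgebra.antipode (R := k)))
        (LinearMap.lTensor H
            ((TensorProduct.assoc k H H A).toLinearMap
              ∘ₗ LinearMap.rTensor A (comul (R := k)))
          (((TensorProduct.assoc k H H A).toLinearMap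
              ∘ₗ LinearMap.rTensor A (comul (R := k))) w))
        = σ ⊗ₜ[k] (LinearMap.rTensor A (actHM.flip m) w) := by
    intro w
    induction w using TensorProduct.induction_on with
    | zero => simp
    | tmul h b =>
      have h0 : ((TensorProduct.assoc k H H A).toLinearMap
            ∘ₗ LinearMap.rTensor A (comul (R := k))) (h ⊗ₜ[k] b)
          = (TensorProduct.assoc k H H A) ((comul (R := k) h) ⊗ₜ[k] b) := by simp
      rw [h0, claimB (comul (R := k) h) b, core h]
      simp
    | add w1 w2 h1 h2 =>
      simp only [map_add, TensorProduct.tmul_add, h1, h2]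
  exact main (ρ a)

end HopfAux
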